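/- Let D ≥ 1 and k ≥ 1 be integers, and let m₁, …, m_k be positive integers with m_i ≤ D for all i. Define M₀ = 1 and M_i = lcm(M_{i−1}, m_i) for 1 ≤ i ≤ k. Assume that m_i does not divide M_{i−1} for every 1 ≤ i ≤ k, and that M_i ≤ D for every 1 ≤ i ≤ k − 1. Then for every positive integer l, the number of indices i ∈ {1, …, k} with D/2^l < m_i ≤ D/2^(l−1) is at most l + 1. -/
import Mathlib


/-- Let `m₁, …, m_k ≤ D` be positive integers, `M₀ = 1` and
`M_i = lcm(M_{i-1}, m_i)`. If `m_i ∤ M_{i-1}` for all `1 ≤ i ≤ k` and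
`M_i ≤ D` for all `1 ≤ i ≤ k - 1`, then for every `l ≥ 1` the number of
indices `i ∈ {1, …, k}` with `D/2^l < m_i ≤ D/2^(l-1)` is at most `l + 1`. -/
theorem dyadic_interval_count (D k : ℕ) (hD : 1 ≤ D) (hk : 1 ≤ k) (m M : ℕ → ℕ)
    (hm : ∀ i, 1 ≤ i → i ≤ k → 0 < m i)
    (hmD : ∀ i, 1 ≤ i → i ≤ k → m i ≤ D)
    (hM0 : M 0 = 1)
    (hMrec : ∀ i, 1 ≤ i → i ≤ k → M i = Nat.lcm (M (i - 1)) (m i))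
    (hndvd : ∀ i, 1 ≤ i → i ≤ k → ¬ m i ∣ M (i - 1))
    (hMD : ∀ i, 1 ≤ i → i ≤ k - 1 → M i ≤ D) :
    ∀ l : ℕ, 1 ≤ l →
      {i : ℕ | 1 ≤ i ∧ i ≤ k ∧ (D : ℝ) / 2 ^ l < (m i : ℝ) ∧
        (m i : ℝ) ≤ (D : ℝ) / 2 ^ (l - 1)}.ncard ≤ l + 1 := by
  classical
  -- M is positive up to k
  have hpos : ∀ i, i ≤ k → 0 < M i := by
    intro i
    induction i with
    | zero => intro _; simp [hM0]
    | succ n ih =>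
      intro h
      rw [hMrec (n + 1) (by omega) h]
      simp only [Nat.add_sub_cancel]
      exact Nat.lcm_pos (ih (by omega)) (hm (n + 1) (by omega) h)
  -- M is monotone under divisibility
  have hdvd : ∀ a b, a ≤ b → b ≤ k → M a ∣ M b := by
    intro a b
    induction b with
    | zero => intro hab _; interval_cases a; exact dvd_rfl
    | succ n ih =>
      intro hab hbk
      rcases Nat.lt_or_ge a (n + 1) with h | h
      · refine (ih (by omega) (by omega)).trans ?_
        rw [hMrec (n + 1) (by omega) hbk]
        simp only [Nat.add_sub_cancel]
        exact Nat.dvd_lcm_left _ _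
      · have : a = n + 1 := by omega
        subst this; exact dvd_rfl
  have hmono : ∀ a b, a ≤ b → b ≤ k → M a ≤ M b := fun a b hab hbk =>
    Nat.le_of_dvd (hpos b hbk) (hdvd a b hab hbk)
  -- each step at least doubles M
  have hdouble : ∀ i, 1 ≤ i → i ≤ k → 2 * M (i - 1) ≤ M i := by
    intro i hi hik
    have hd : M (i - 1) ∣ M i := by
      rw [hMrec i hi hik]; exact Nat.dvd_lcm_left _ _
    obtain ⟨c, hc⟩ := hd
    have hMi : 0 < M i := hpos i hik
    have hMi1 : 0 < M (i - 1) := hpos (i - 1) (by omega)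
    have hc0 : c ≠ 0 := by rintro rfl; simp [hc] at hMi
    have hc1 : c ≠ 1 := by
      rintro rfl
      apply hndvd i hi hik
      have : m i ∣ M i := by rw [hMrec i hi hik]; exact Nat.dvd_lcm_right _ _
      simpa [hc] using this
    have : 2 ≤ c := by omega
    calc 2 * M (i - 1) = M (i - 1) * 2 := by ring
      _ ≤ M (i - 1) * c := Nat.mul_le_mul_left _ this
      _ = M i := hc.symm
  intro l hl
  set P : ℕ → Prop := fun i => (D : ℝ) / 2 ^ l < (m i : ℝ) ∧ (m i : ℝ) ≤ (D : ℝ) / 2 ^ (l - 1)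
  set T : Finset ℕ := (Finset.Icc 1 k).filter P with hT
  have hSeq : {i : ℕ | 1 ≤ i ∧ i ≤ k ∧ (D : ℝ) / 2 ^ l < (m i : ℝ) ∧
      (m i : ℝ) ≤ (D : ℝ) / 2 ^ (l - 1)} = ↑T := by
    ext i
    simp only [hT, Finset.coe_filter, Finset.mem_Icc, Set.mem_setOf_eq, P]
    tauto
  rw [hSeq, Set.ncard_coe_finset]
  by_contra hcon
  push_neg at hcon
  set t := T.card with htcard
  have ht : l + 2 ≤ t := by omega
  have e := T.orderIsoOfFin htcard.symm
  -- membership facts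
  have hmem : ∀ j : Fin t, 1 ≤ ((e j : ℕ)) ∧ ((e j : ℕ)) ≤ k ∧
      (D : ℝ) / 2 ^ l < (m (e j) : ℝ) := by
    intro j
    have := (e j).2
    simp only [hT, Finset.mem_filter, Finset.mem_Icc, P] at this
    exact ⟨this.1.1, this.1.2, this.2.1⟩
  have hemono : ∀ j j' : Fin t, j < j' → ((e j : ℕ)) < ((e j' : ℕ)) := by
    intro j j' hjj'
    exact_mod_cast e.strictMono hjj'
  have h0t : 0 < t := by omega
  set i0 : ℕ := (e ⟨0, h0t⟩ : ℕ) with hi0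
  -- key growth claim
  have key : ∀ j : ℕ, (hj : j < t) → 2 ^ j * m i0 ≤ M ((e ⟨j, hj⟩ : ℕ)) := by
    intro j
    induction j with
    | zero =>
      intro hj
      have hd : m i0 ∣ M i0 := by
        rw [hMrec i0 (hmem ⟨0, h0t⟩).1 (hmem ⟨0, h0t⟩).2.1]
        exact Nat.dvd_lcm_right _ _
      simpa using Nat.le_of_dvd (hpos i0 (hmem ⟨0, h0t⟩).2.1) hd
    | succ n ih =>
      intro hj
      set a : ℕ := (e ⟨n, by omega⟩ : ℕ)
      set b : ℕ := (e ⟨n + 1, hj⟩ : ℕ)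
      have hab : a < b := hemono ⟨n, by omega⟩ ⟨n + 1, hj⟩ (by simp)
      have hb1 : 1 ≤ b := (hmem ⟨n + 1, hj⟩).1
      have hbk : b ≤ k := (hmem ⟨n + 1, hj⟩).2.1
      calc 2 ^ (n + 1) * m i0 = 2 * (2 ^ n * m i0) := by ring
        _ ≤ 2 * M a := Nat.mul_le_mul_left 2 (ih (by omega))
        _ ≤ 2 * M (b - 1) := by
            have := hmono a (b - 1) (by omega) (by omega); omega
        _ ≤ M b := hdouble b hb1 hbk
  -- final contradiction
  have h1 : (⟨t - 2, by omega⟩ : Fin t) < ⟨t - 1, by omega⟩ := by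
    simp [Fin.lt_def]; omega
  set a : ℕ := (e ⟨t - 2, by omega⟩ : ℕ) with ha
  have hab : a < (e ⟨t - 1, by omega⟩ : ℕ) := hemono _ _ h1
  have hak : a ≤ k - 1 := by
    have := (hmem ⟨t - 1, by omega⟩).2.1; omega
  have hMa : M a ≤ D := hMD a (hmem ⟨t - 2, by omega⟩).1 hak
  have hkey : 2 ^ (t - 2) * m i0 ≤ D := le_trans (key (t - 2) (by omega)) hMa
  -- D < 2^l * m i0
  have hm0 : (D : ℝ) / 2 ^ l < (m i0 : ℝ) := (hmem ⟨0, h0t⟩).2.2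
  have hDlt : (D : ℝ) < 2 ^ l * (m i0 : ℝ) := by
    rw [div_lt_iff₀ (by positivity)] at hm0
    linarith [hm0]
  have hDlt' : D < 2 ^ l * m i0 := by exact_mod_cast hDlt
  have hmi0 : 0 < m i0 := hm i0 (hmem ⟨0, h0t⟩).1 (hmem ⟨0, h0t⟩).2.1
  have hpow : 2 ^ (t - 2) < 2 ^ l := by
    have := lt_of_le_of_lt hkey hDlt'
    exact lt_of_mul_lt_mul_right this (le_of_lt hmi0)
  have : t - 2 < l := by
    exact (Nat.pow_lt_pow_iff_right (by norm_num)).mp hpow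
  omega
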